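/- Let (X,‖·‖) be a real normed space, n ≥ 2, and ψ ∈ Ψ_n. Then for every x = (x_1,…,x_n) ∈ X^n and every x* = (x*_1,…,x*_n) ∈ (X*)^n, one has Σ_{i=1}^n ‖x*_i‖*·‖x_i‖ ≤ |||x*|||_{ψ*} · |||x|||_ψ. -/
import Mathlib


open Finset

/-- The class `Ψ_n` of continuous convex functions on the standard simplex `Ω_n`
with `ψ(e_i) = 1` and the renormalization inequality. -/
def PsiClass (n : ℕ) (ψ : (Fin n → ℝ) → ℝ) : Prop :=
  ContinuousOn ψ (stdSimplex ℝ (Fin n)) ∧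
  ConvexOn ℝ (stdSimplex ℝ (Fin n)) ψ ∧
  (∀ i : Fin n, ψ (fun j => if j = i then 1 else 0) = 1) ∧
  (∀ t ∈ stdSimplex ℝ (Fin n), ∀ i : Fin n, t i < 1 →
    (1 - t i) * ψ (fun j => if j = i then 0 else t j / (1 - t i)) ≤ ψ t)

-- The `ψ`-product norm `|||x|||_ψ` on `X^n`.
open scoped Classical in
noncomputable def prodNorm {X : Type*} [NormedAddCommGroup X] {n : ℕ}
    (ψ : (Fin n → ℝ) → ℝ) (x : Fin n → X) : ℝ :=
  if x = 0 then 0 else (∑ i, ‖x i‖) * ψ (fun i => ‖x i‖ / ∑ j, ‖x j‖)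

/-- The conjugate-type function `ψ*(s) = max_{t ∈ Ω_n} ⟨t,s⟩ / ψ(t)`. -/
noncomputable def psiStar {n : ℕ} (ψ : (Fin n → ℝ) → ℝ) (s : Fin n → ℝ) : ℝ :=
  sSup ((fun t : Fin n → ℝ => (∑ i, t i * s i) / ψ t) '' stdSimplex ℝ (Fin n))

-- key lemma: t j ≤ ψ t
lemma psi_ge_coord {n : ℕ} {ψ : (Fin n → ℝ) → ℝ} (hψ : PsiClass n ψ) :
    ∀ t ∈ stdSimplex ℝ (Fin n), ∀ j : Fin n, t j ≤ ψ t := by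
  classical
  suffices h : ∀ k : ℕ, ∀ t ∈ stdSimplex ℝ (Fin n), ∀ j : Fin n,
      (Finset.univ.filter (fun i => t i ≠ 0 ∧ i ≠ j)).card ≤ k → t j ≤ ψ t by
    intro t ht j
    exact h _ t ht j le_rfl
  intro k
  induction k with
  | zero =>
    intro t ht j hc
    have hempty : ∀ i : Fin n, i ≠ j → t i = 0 := by
      intro i hij
      by_contra hne
      have : i ∈ Finset.univ.filter (fun i => t i ≠ 0 ∧ i ≠ j) := by
        simp [hne, hij]
      have := Finset.card_pos.mpr ⟨i, this⟩
      omega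
    have htj : t j = 1 := by
      have := ht.2
      rwa [Finset.sum_eq_single j (fun i _ hij => hempty i hij) (by simp)] at this
    have : t = fun i => if i = j then 1 else 0 := by
      funext i
      by_cases hij : i = j
      · simp [hij, htj]
      · simp [hij, hempty i hij]
    rw [this, hψ.2.2.1 j, ← this, htj]
  | succ k ih =>
    intro t ht j hc
    by_cases hk : (Finset.univ.filter (fun i => t i ≠ 0 ∧ i ≠ j)).card ≤ k
    · exact ih t ht j hk
    have hne : (Finset.univ.filter (fun i => t i ≠ 0 ∧ i ≠ j)).Nonempty := by
      rw [← Finset.card_pos]; omega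
    obtain ⟨i, hi⟩ := hne
    simp only [Finset.mem_filter, Finset.mem_univ, true_and] at hi
    obtain ⟨hti, hij⟩ := hi
    have hle1 : ∀ m : Fin n, t m ≤ 1 := by
      intro m
      calc t m ≤ ∑ i, t i := Finset.single_le_sum (fun i _ => ht.1 i) (Finset.mem_univ m)
        _ = 1 := ht.2
    by_cases h1 : t i = 1
    · -- then t = e_i, t j = 0
      have hothers : ∀ m, m ≠ i → t m = 0 := by
        intro m hmi
        have hsum := ht.2
        have h2 : ∑ m ∈ Finset.univ.erase i, t m = 0 := by
          have := Finset.add_sum_erase Finset.univ t (Finset.mem_univ i)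
          rw [ht.2] at this; linarith [this, h1]
        have := Finset.sum_eq_zero_iff_of_nonneg (fun m _ => ht.1 m) |>.mp h2 m
          (Finset.mem_erase.mpr ⟨hmi, Finset.mem_univ m⟩)
        exact this
      have htj0 : t j = 0 := hothers j (fun h => hij h.symm)
      have : t = fun m => if m = i then 1 else 0 := by
        funext m
        by_cases hmi : m = i
        · simp [hmi, h1]
        · simp [hmi, hothers m hmi]
      rw [htj0, this, hψ.2.2.1 i]
      norm_num
    have hlt1 : t i < 1 := lt_of_le_of_ne (hle1 i) h1
    have hpos : (0:ℝ) < 1 - t i := by linarith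
    set u : Fin n → ℝ := fun m => if m = i then 0 else t m / (1 - t i) with hu
    have husimplex : u ∈ stdSimplex ℝ (Fin n) := by
      constructor
      · intro m
        by_cases hmi : m = i
        · simp [hu, hmi]
        · simp only [hu, hmi, if_neg]
          exact div_nonneg (ht.1 m) hpos.le
      · have hui : u i = 0 := by simp [hu]
        have : ∑ m, u m = (∑ m ∈ Finset.univ.erase i, t m) / (1 - t i) := by
          rw [← Finset.sum_erase Finset.univ hui, Finset.sum_div]
          apply Finset.sum_congr rfl
          intro m hm
          simp [hu, (Finset.mem_erase.mp hm).1]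
        rw [this]
        have h2 : ∑ m ∈ Finset.univ.erase i, t m = 1 - t i := by
          have := Finset.add_sum_erase Finset.univ t (Finset.mem_univ i)
          rw [ht.2] at this; linarith
        rw [h2, div_self hpos.ne']
    have hcard : (Finset.univ.filter (fun m => u m ≠ 0 ∧ m ≠ j)).card ≤ k := by
      have hsub : Finset.univ.filter (fun m => u m ≠ 0 ∧ m ≠ j) ⊆
          (Finset.univ.filter (fun m => t m ≠ 0 ∧ m ≠ j)).erase i := by
        intro m hm
        simp only [Finset.mem_filter, Finset.mem_univ, true_and] at hm
        have hmi : m ≠ i := by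
          intro h; apply hm.1; simp [hu, h]
        refine Finset.mem_erase.mpr ⟨hmi, ?_⟩
        simp only [Finset.mem_filter, Finset.mem_univ, true_and]
        refine ⟨?_, hm.2⟩
        intro h; apply hm.1; simp [hu, hmi, h]
      have := Finset.card_le_card hsub
      have hicard : i ∈ Finset.univ.filter (fun m => t m ≠ 0 ∧ m ≠ j) := by
        simp [hti, hij]
      have := Finset.card_erase_of_mem hicard
      omega
    have hihu := ih u husimplex j hcard
    have haxiom := hψ.2.2.2 t ht i hlt1
    have huj : u j = t j / (1 - t i) := by simp only [hu, if_neg (Ne.symm hij)]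
    calc t j = (1 - t i) * (t j / (1 - t i)) := by field_simp
      _ = (1 - t i) * u j := by rw [huj]
      _ ≤ (1 - t i) * ψ u := by nlinarith
      _ ≤ ψ t := haxiom

theorem stmt_1 {X : Type*} [NormedAddCommGroup X] [NormedSpace ℝ X]
    (n : ℕ) (hn : 2 ≤ n) (ψ : (Fin n → ℝ) → ℝ) (hψ : PsiClass n ψ)
    (x : Fin n → X) (xs : Fin n → (X →L[ℝ] ℝ)) :
    ∑ i, ‖xs i‖ * ‖x i‖ ≤ prodNorm (psiStar ψ) xs * prodNorm ψ x := by
  classical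
  by_cases hx : x = 0
  · rw [hx]; simp [prodNorm]
  by_cases hxs : xs = 0
  · rw [hxs]; simp [prodNorm]
  set S := ∑ i, ‖x i‖ with hS
  set T := ∑ i, ‖xs i‖ with hT
  have hSpos : 0 < S := by
    obtain ⟨i, hi⟩ : ∃ i, x i ≠ 0 := by
      by_contra h; push_neg at h; exact hx (funext fun i => h i)
    exact Finset.sum_pos' (fun i _ => norm_nonneg _)
      ⟨i, Finset.mem_univ i, norm_pos_iff.mpr hi⟩
  have hTpos : 0 < T := by
    obtain ⟨i, hi⟩ : ∃ i, xs i ≠ 0 := by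
      by_contra h; push_neg at h; exact hxs (funext fun i => h i)
    exact Finset.sum_pos' (fun i _ => norm_nonneg _)
      ⟨i, Finset.mem_univ i, norm_pos_iff.mpr hi⟩
  set t : Fin n → ℝ := fun i => ‖x i‖ / S with ht
  set s : Fin n → ℝ := fun i => ‖xs i‖ / T with hs
  have htsimplex : t ∈ stdSimplex ℝ (Fin n) := by
    refine ⟨fun i => div_nonneg (norm_nonneg _) hSpos.le, ?_⟩
    rw [ht]; rw [← Finset.sum_div, ← hS, div_self hSpos.ne']
  have hssimplex : s ∈ stdSimplex ℝ (Fin n) := by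
    refine ⟨fun i => div_nonneg (norm_nonneg _) hTpos.le, ?_⟩
    rw [hs]; rw [← Finset.sum_div, ← hT, div_self hTpos.ne']
  have hψpos : ∀ u ∈ stdSimplex ℝ (Fin n), 1 / (n : ℝ) ≤ ψ u := by
    intro u hu
    have hnpos : (0:ℝ) < n := by positivity
    obtain ⟨j, _, hj⟩ : ∃ j ∈ Finset.univ, 1 / (n : ℝ) ≤ u j := by
      apply Finset.exists_le_of_sum_le ⟨⟨0, by omega⟩, Finset.mem_univ _⟩
      rw [hu.2, Finset.sum_const, Finset.card_univ, Fintype.card_fin, nsmul_eq_mul]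
      rw [mul_one_div, div_self hnpos.ne']
    exact hj.trans (psi_ge_coord hψ u hu j)
  have hψtpos : 0 < ψ t := lt_of_lt_of_le (by positivity) (hψpos t htsimplex)
  have hbdd : BddAbove ((fun u : Fin n → ℝ => (∑ i, u i * s i) / ψ u) '' stdSimplex ℝ (Fin n)) := by
    refine ⟨(n : ℝ), ?_⟩
    rintro _ ⟨u, hu, rfl⟩
    have hnum : ∑ i, u i * s i ≤ 1 := by
      have hle : ∑ i, u i * s i ≤ ∑ i, u i := by
        apply Finset.sum_le_sum
        intro i _
        have hsi : s i ≤ 1 := by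
          calc s i ≤ ∑ j, s j := Finset.single_le_sum (fun j _ => hssimplex.1 j) (Finset.mem_univ i)
            _ = 1 := hssimplex.2
        calc u i * s i ≤ u i * 1 := mul_le_mul_of_nonneg_left hsi (hu.1 i)
          _ = u i := mul_one _
      rw [hu.2] at hle
      exact hle
    have hden := hψpos u hu
    have hnpos : (0:ℝ) < 1 / (n:ℝ) := by positivity
    calc (∑ i, u i * s i) / ψ u ≤ 1 / (1 / (n:ℝ)) :=
          div_le_div₀ zero_le_one hnum hnpos hden
      _ = (n : ℝ) := one_div_one_div _
  have hkey : (∑ i, t i * s i) / ψ t ≤ psiStar ψ s :=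
    le_csSup hbdd ⟨t, htsimplex, rfl⟩
  have hsum : ∑ i, t i * s i = (∑ i, ‖xs i‖ * ‖x i‖) / (S * T) := by
    rw [Finset.sum_div]
    apply Finset.sum_congr rfl
    intro i _
    rw [ht, hs, div_mul_div_comm, mul_comm ‖x i‖]
  rw [hsum] at hkey
  have h1 := (div_le_iff₀ hψtpos).mp hkey
  have h2 := (div_le_iff₀ (mul_pos hSpos hTpos)).mp h1
  have hrw : prodNorm (psiStar ψ) xs * prodNorm ψ x = (T * psiStar ψ s) * (S * ψ t) := by
    rw [prodNorm, prodNorm, if_neg hxs, if_neg hx]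
  rw [hrw]
  calc ∑ i, ‖xs i‖ * ‖x i‖ ≤ psiStar ψ s * ψ t * (S * T) := h2
    _ = (T * psiStar ψ s) * (S * ψ t) := by ring
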